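/- Soundness of resolution: let R = (H ⇒ C) and R' = (H' ⇒ C') be Horn clauses, F0 ∈ H' a hypothesis such that C and F0 are unifiable with most general unifier σ, and define R'' = R ∘_{F0} R' = (σ(H ∪ (H' \ {F0})) ⇒ σC'). Then any closed fact derivable using R'' (together with a set of clauses S) is also derivable using R and R' (together with S). -/

import Mathlib

/-- First-order terms over function symbols `F`, with natural-number variables. -/
inductive Trm (F : Type) : Type
  | var : Nat → Trm F
  | app : F → List (Trm F) → Trm F

namespace Trm

variable {F : Type}

/-- Homomorphic extension of a substitution to terms. -/
def subst (σ : Nat → Trm F) : Trm F → Trm F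
  | var x => σ x
  | app f ts => app f (ts.attach.map (fun t => subst σ t.1))
decreasing_by
  simp_wf
  have := List.sizeOf_lt_of_mem t.2
  omega

/-- `VarOcc x t` : variable `x` occurs in term `t`. -/
inductive VarOcc (x : Nat) : Trm F → Prop
  | var : VarOcc x (var x)
  | app {f : F} {ts : List (Trm F)} {t : Trm F} : t ∈ ts → VarOcc x t → VarOcc x (app f ts)

end Trm

/-- A term is closed when no variable occurs in it. -/
def ClosedT {F : Type} (t : Trm F) : Prop := ∀ x, ¬ Trm.VarOcc x t

/-- A fact is an atom `P(t1,...,tn)`. -/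
structure Fct (P F : Type) where
  pred : P
  args : List (Trm F)

def Fct.subst {P F : Type} (σ : Nat → Trm F) (a : Fct P F) : Fct P F :=
  ⟨a.pred, a.args.map (Trm.subst σ)⟩

def Fct.Closed {P F : Type} (a : Fct P F) : Prop := ∀ t ∈ a.args, ClosedT t

def Fct.VarOcc {P F : Type} (x : Nat) (a : Fct P F) : Prop := ∃ t ∈ a.args, Trm.VarOcc x t

/-- A Horn clause: a finite multiset of hypotheses and a conclusion. -/
structure Clause (P F : Type) where
  hyp : Multiset (Fct P F)
  concl : Fct P F

/-- `(H1 ⇒ C1)` subsumes `(H2 ⇒ C2)` iff some substitution σ has `σ C1 = C2` and `σ H1 ⊆ H2`. -/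
def Subsumes {P F : Type} (c1 c2 : Clause P F) : Prop :=
  ∃ σ : Nat → Trm F, Fct.subst σ c1.concl = c2.concl ∧ c1.hyp.map (Fct.subst σ) ≤ c2.hyp

/-- Derivability of a closed fact via a finite derivation tree: each node is labeled by a
clause of `R` that subsumes the local inference `{labels of outgoing edges} ⇒ label of
incoming edge`. -/
inductive DTree {P F : Type} (R : Set (Clause P F)) : Fct P F → Prop
  | node (cl : Clause P F) (hs : Multiset (Fct P F)) (C : Fct P F) :
      cl ∈ R → Subsumes cl ⟨hs, C⟩ → (∀ f ∈ hs, DTree R f) → DTree R C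


theorem Trm.subst_app {F : Type} (σ : Nat → Trm F) (f : F) (ts : List (Trm F)) :
    Trm.subst σ (Trm.app f ts) = Trm.app f (ts.map (Trm.subst σ)) := by
  rw [Trm.subst]
  congr 1
  exact List.attach_map_val (l := ts) (f := Trm.subst σ)

theorem Trm.subst_subst {F : Type} (δ σ : Nat → Trm F) (t : Trm F) :
    Trm.subst δ (Trm.subst σ t) = Trm.subst (fun x => Trm.subst δ (σ x)) t := by
  induction t using Trm.subst.induct with
  | case1 x => simp [Trm.subst]
  | case2 f ts ih =>
      simp only [Trm.subst_app, List.map_map]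
      congr 1
      refine List.map_congr_left ?_
      intro t ht
      exact ih ⟨t, ht⟩

theorem Fct.subst_subst {P F : Type} (δ σ : Nat → Trm F) (a : Fct P F) :
    Fct.subst δ (Fct.subst σ a) = Fct.subst (fun x => Trm.subst δ (σ x)) a := by
  simp [Fct.subst, Trm.subst_subst]

/-- Soundness of resolution: if `R = (H ⇒ C)`, `R' = (H' ⇒ C')` with `F0 ∈ H'`
(here `H' = F0 ::ₘ H'0`), `C` and `F0` are unifiable with most general unifier `σ`, and
`R'' = (σ(H ∪ (H' \ {F0})) ⇒ σC')` is the resolvent, then any closed fact derivable using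
`R''` together with a clause set `S` is also derivable using `R` and `R'` together with `S`. -/
theorem resolution_sound {P F : Type}
    (H H'0 : Multiset (Fct P F)) (C C' F0 : Fct P F)
    (σ : Nat → Trm F)
    (hunif : Fct.subst σ C = Fct.subst σ F0)
    (hmgu : ∀ δ : Nat → Trm F, Fct.subst δ C = Fct.subst δ F0 →
      ∃ δ' : Nat → Trm F, ∀ x, δ x = Trm.subst δ' (σ x))
    (S : Set (Clause P F)) (G : Fct P F) (hG : G.Closed)
    (h : DTree (insert ⟨(H + H'0).map (Fct.subst σ), Fct.subst σ C'⟩ S) G) :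
    DTree (insert ⟨H, C⟩ (insert ⟨F0 ::ₘ H'0, C'⟩ S)) G
:= by
  clear hG
  induction h with
  | node cl hs Cg hcl hsub hder ih =>
    rcases hcl with hcl | hcl
    · -- cl is the resolvent
      subst hcl
      obtain ⟨δ, hconcl, hhyp⟩ := hsub
      set τ : Nat → Trm F := fun x => Trm.subst δ (σ x) with hτ
      have hcomp : ∀ a : Fct P F, Fct.subst δ (Fct.subst σ a) = Fct.subst τ a :=
        fun a => Fct.subst_subst δ σ a
      have hle : ((H + H'0).map (Fct.subst τ)) ≤ hs := by
        calc (H + H'0).map (Fct.subst τ)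
            = ((H + H'0).map (Fct.subst σ)).map (Fct.subst δ) := by
              rw [Multiset.map_map]; exact (Multiset.map_congr rfl (fun a _ => (hcomp a).symm))
          _ ≤ hs := hhyp
      have hCtree : DTree (insert ⟨H, C⟩ (insert ⟨F0 ::ₘ H'0, C'⟩ S)) (Fct.subst τ C) := by
        refine DTree.node ⟨H, C⟩ (H.map (Fct.subst τ)) (Fct.subst τ C)
          (Set.mem_insert _ _) ⟨τ, rfl, le_refl _⟩ ?_
        intro f hf
        apply ih
        refine Multiset.subset_of_le hle ?_
        rw [Multiset.map_add]
        exact Multiset.mem_add.mpr (Or.inl hf)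
      refine DTree.node ⟨F0 ::ₘ H'0, C'⟩ ((F0 ::ₘ H'0).map (Fct.subst τ)) Cg
        (Set.mem_insert_iff.mpr (Or.inr (Set.mem_insert _ _))) ?_ ?_
      · refine ⟨τ, ?_, le_refl _⟩
        show Fct.subst τ C' = Cg
        rw [← hcomp, hconcl]
      · intro f hf
        rw [Multiset.map_cons, Multiset.mem_cons] at hf
        rcases hf with hf | hf
        · subst hf
          have : Fct.subst τ F0 = Fct.subst τ C := by
            rw [← hcomp, ← hcomp, hunif]
          rw [this]; exact hCtree
        · apply ih
          refine Multiset.subset_of_le hle ?_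
          rw [Multiset.map_add]
          exact Multiset.mem_add.mpr (Or.inr hf)
    · exact DTree.node cl hs Cg
        (Set.mem_insert_iff.mpr (Or.inr (Set.mem_insert_iff.mpr (Or.inr hcl)))) hsub ih
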